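/- If a connected graph G contains an induced subgraph isomorphic to the complete bipartite graph K_{2,3}, then the path-length distance ∂ of G is not a negative definite kernel, and hence there exists q ∈ [0,1] for which Q_q is not positive semidefinite. -/

import Mathlib

open scoped ComplexOrder

/-- `Q`-matrix positive semidefiniteness: the kernel `(x, y) ↦ q ^ ∂(x,y)` is a
positive definite kernel on the vertex set (with `0 ^ 0 = 1`). -/
def QPSD {V : Type*} (G : SimpleGraph V) (q : ℝ) : Prop :=
  ∀ f : V →₀ ℂ,
    0 ≤ ∑ x ∈ f.support, ∑ y ∈ f.support,
      (starRingEnd ℂ) (f x) * f y * (q : ℂ) ^ G.dist x y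

/-- A real-valued kernel  is negative definite if the associated quadratic form is
nonpositive on finitely supported functions summing to zero. -/
def NegDefKer {X : Type*} (d : X → X → ℝ) : Prop :=
  ∀ f : X →₀ ℂ, (∑ x ∈ f.support, f x) = 0 →
    ∑ x ∈ f.support, ∑ y ∈ f.support,
      (starRingEnd ℂ) (f x) * f y * ((d x y : ℝ) : ℂ) ≤ 0

lemma dist_two_aux {V : Type*} (G : SimpleGraph V) (hconn : G.Connected) {x y z : V}
    (hne : x ≠ y) (hnadj : ¬ G.Adj x y) (h1 : G.Adj x z) (h2 : G.Adj z y) :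
    G.dist x y = 2 := by
  have hle : G.dist x y ≤ 2 := by
    have := G.dist_le (SimpleGraph.Walk.cons h1 (SimpleGraph.Walk.cons h2 SimpleGraph.Walk.nil))
    simpa using this
  have hpos : 0 < G.dist x y := hconn.pos_dist_of_ne hne
  have hne1 : G.dist x y ≠ 1 := fun h => hnadj (SimpleGraph.dist_eq_one_iff_adj.mp h)
  omega

lemma sum5_aux {V : Type*} [DecidableEq V] {a₁ a₂ b₁ b₂ b₃ : V}
    (h12 : a₁ ≠ a₂) (h13 : a₁ ≠ b₁) (h14 : a₁ ≠ b₂) (h15 : a₁ ≠ b₃)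
    (h23 : a₂ ≠ b₁) (h24 : a₂ ≠ b₂) (h25 : a₂ ≠ b₃)
    (h34 : b₁ ≠ b₂) (h35 : b₁ ≠ b₃) (h45 : b₂ ≠ b₃) (g : V → ℂ) :
    ∑ x ∈ ({a₁, a₂, b₁, b₂, b₃} : Finset V), g x =
      g a₁ + g a₂ + g b₁ + g b₂ + g b₃ := by
  rw [Finset.sum_insert (by simp [h12, h13, h14, h15]),
    Finset.sum_insert (by simp [h23, h24, h25]),
    Finset.sum_insert (by simp [h34, h35]),
    Finset.sum_insert (by simp [h45]), Finset.sum_singleton]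
  ring

theorem stmt18 {V : Type*} (G : SimpleGraph V) (hconn : G.Connected)
    (a₁ a₂ b₁ b₂ b₃ : V)
    (hdist : [a₁, a₂, b₁, b₂, b₃].Pairwise (· ≠ ·))
    (hab : ∀ a ∈ [a₁, a₂], ∀ b ∈ [b₁, b₂, b₃], G.Adj a b)
    (haa : ¬ G.Adj a₁ a₂)
    (hbb : ∀ b ∈ [b₁, b₂, b₃], ∀ b' ∈ [b₁, b₂, b₃], ¬ G.Adj b b') :
    ¬ NegDefKer (fun x y : V => (G.dist x y : ℝ)) ∧
      ∃ q ∈ Set.Icc (0 : ℝ) 1, ¬ QPSD G q := by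
  classical
  simp only [List.pairwise_cons, List.mem_cons, List.mem_singleton, List.not_mem_nil] at hdist
  obtain ⟨h1, h2, h3, h4, -⟩ := hdist
  have h12 : a₁ ≠ a₂ := h1 a₂ (by simp)
  have h13 : a₁ ≠ b₁ := h1 b₁ (by simp)
  have h14 : a₁ ≠ b₂ := h1 b₂ (by simp)
  have h15 : a₁ ≠ b₃ := h1 b₃ (by simp)
  have h23 : a₂ ≠ b₁ := h2 b₁ (by simp)
  have h24 : a₂ ≠ b₂ := h2 b₂ (by simp)
  have h25 : a₂ ≠ b₃ := h2 b₃ (by simp)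
  have h34 : b₁ ≠ b₂ := h3 b₂ (by simp)
  have h35 : b₁ ≠ b₃ := h3 b₃ (by simp)
  have h45 : b₂ ≠ b₃ := h4 b₃ (by simp)
  -- adjacency facts
  have A11 : G.Adj a₁ b₁ := hab a₁ (by simp) b₁ (by simp)
  have A12 : G.Adj a₁ b₂ := hab a₁ (by simp) b₂ (by simp)
  have A13 : G.Adj a₁ b₃ := hab a₁ (by simp) b₃ (by simp)
  have A21 : G.Adj a₂ b₁ := hab a₂ (by simp) b₁ (by simp)
  have A22 : G.Adj a₂ b₂ := hab a₂ (by simp) b₂ (by simp)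
  have A23 : G.Adj a₂ b₃ := hab a₂ (by simp) b₃ (by simp)
  -- distance facts
  have D0 : ∀ v : V, G.dist v v = 0 := fun v => SimpleGraph.dist_self
  have d11 : G.dist a₁ b₁ = 1 := SimpleGraph.dist_eq_one_iff_adj.mpr A11
  have d12 : G.dist a₁ b₂ = 1 := SimpleGraph.dist_eq_one_iff_adj.mpr A12
  have d13 : G.dist a₁ b₃ = 1 := SimpleGraph.dist_eq_one_iff_adj.mpr A13
  have d21 : G.dist a₂ b₁ = 1 := SimpleGraph.dist_eq_one_iff_adj.mpr A21
  have d22 : G.dist a₂ b₂ = 1 := SimpleGraph.dist_eq_one_iff_adj.mpr A22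
  have d23 : G.dist a₂ b₃ = 1 := SimpleGraph.dist_eq_one_iff_adj.mpr A23
  have e11 : G.dist b₁ a₁ = 1 := by rw [SimpleGraph.dist_comm]; exact d11
  have e12 : G.dist b₂ a₁ = 1 := by rw [SimpleGraph.dist_comm]; exact d12
  have e13 : G.dist b₃ a₁ = 1 := by rw [SimpleGraph.dist_comm]; exact d13
  have e21 : G.dist b₁ a₂ = 1 := by rw [SimpleGraph.dist_comm]; exact d21
  have e22 : G.dist b₂ a₂ = 1 := by rw [SimpleGraph.dist_comm]; exact d22
  have e23 : G.dist b₃ a₂ = 1 := by rw [SimpleGraph.dist_comm]; exact d23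
  have daa : G.dist a₁ a₂ = 2 := dist_two_aux G hconn h12 haa A11 A21.symm
  have daa' : G.dist a₂ a₁ = 2 := by rw [SimpleGraph.dist_comm]; exact daa
  have db12 : G.dist b₁ b₂ = 2 :=
    dist_two_aux G hconn h34 (hbb b₁ (by simp) b₂ (by simp)) A11.symm A12
  have db13 : G.dist b₁ b₃ = 2 :=
    dist_two_aux G hconn h35 (hbb b₁ (by simp) b₃ (by simp)) A11.symm A13
  have db23 : G.dist b₂ b₃ = 2 :=
    dist_two_aux G hconn h45 (hbb b₂ (by simp) b₃ (by simp)) A12.symm A13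
  have db21 : G.dist b₂ b₁ = 2 := by rw [SimpleGraph.dist_comm]; exact db12
  have db31 : G.dist b₃ b₁ = 2 := by rw [SimpleGraph.dist_comm]; exact db13
  have db32 : G.dist b₃ b₂ = 2 := by rw [SimpleGraph.dist_comm]; exact db23
  -- the test function
  set s : Finset V := {a₁, a₂, b₁, b₂, b₃} with hs
  set φ : V → ℂ := fun v => if v = a₁ ∨ v = a₂ then 3
    else if v = b₁ ∨ v = b₂ ∨ v = b₃ then -2 else 0 with hφ
  have hsupp : ∀ v : V, v ∈ s ↔ φ v ≠ 0 := by
    intro v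
    by_cases hv1 : v = a₁ ∨ v = a₂
    · rcases hv1 with h | h <;> simp [hs, hφ, h]
    · by_cases hv2 : v = b₁ ∨ v = b₂ ∨ v = b₃
      · rcases hv2 with h | h | h <;>
          simp [hs, hφ, h, h13.symm, h23.symm, h14.symm, h24.symm, h15.symm, h25.symm]
      · push_neg at hv1 hv2
        simp [hs, hφ, hv1, hv2]
  set f : V →₀ ℂ := ⟨s, φ, hsupp⟩ with hf
  have hfsupp : f.support = s := rfl
  have fa1 : f a₁ = 3 := by simp [hf, hφ, Finsupp.coe_mk]
  have fa2 : f a₂ = 3 := by simp [hf, hφ, Finsupp.coe_mk]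
  have fb1 : f b₁ = -2 := by simp [hf, hφ, Finsupp.coe_mk, h13.symm, h23.symm]
  have fb2 : f b₂ = -2 := by simp [hf, hφ, Finsupp.coe_mk, h14.symm, h24.symm]
  have fb3 : f b₃ = -2 := by simp [hf, hφ, Finsupp.coe_mk, h15.symm, h25.symm]
  have hsum5 := fun g : V → ℂ => sum5_aux h12 h13 h14 h15 h23 h24 h25 h34 h35 h45 g
  constructor
  · intro hneg
    have hzero : (∑ x ∈ f.support, f x) = 0 := by
      rw [hfsupp, hsum5, fa1, fa2, fb1, fb2, fb3]; ring
    have := hneg f hzero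
    rw [hfsupp, hsum5] at this
    simp only [hs, hsum5] at this
    rw [fa1, fa2, fb1, fb2, fb3, D0 a₁, D0 a₂, D0 b₁, D0 b₂, D0 b₃,
      d11, d12, d13, d21, d22, d23, e11, e12, e13, e21, e22, e23,
      daa, daa', db12, db13, db23, db21, db31, db32] at this
    simp only [map_neg, map_ofNat, Complex.conj_ofNat] at this
    ring_nf at this
    simp only [Complex.le_def, Complex.zero_re, Complex.zero_im] at this
    norm_num at this
  · refine ⟨6/7, ⟨by norm_num, by norm_num⟩, fun hpsd => ?_⟩
    have := hpsd f
    rw [hfsupp, hsum5] at this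
    simp only [hs, hsum5] at this
    rw [fa1, fa2, fb1, fb2, fb3, D0 a₁, D0 a₂, D0 b₁, D0 b₂, D0 b₃,
      d11, d12, d13, d21, d22, d23, e11, e12, e13, e21, e22, e23,
      daa, daa', db12, db13, db23, db21, db31, db32] at this
    simp only [map_neg, map_ofNat, Complex.conj_ofNat] at this
    ring_nf at this
    simp only [Complex.le_def, Complex.zero_re, Complex.zero_im] at this
    norm_num at this
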